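/- For n ≥ 5, there exists an endomorphism f of the free group F_2 on generators x, y such that: (1) the image of f is contained in the commutator subgroup of F_2, and (2) there is a surjective homomorphism ψ : F_2 → A_n (onto the alternating group) with ψ ∘ f = ψ. -/

import Mathlib

open Equiv Equiv.Perm Subgroup

/-- Abstract "index two coset" step: if `H` is a subgroup absorbing left
multiplication by `σ` and `σ⁻¹` on the union `H ∪ tH`, then every element of
`closure {σ, t}` lies in `H ∪ tH`. -/
lemma coset_step {G : Type*} [Group G] {σ t : G} (ht : t * t = 1) {H : Subgroup G}
    (hA : ∀ y, y ∈ H → σ * y ∈ H ∨ t * (σ * y) ∈ H)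
    (hB : ∀ y, t * y ∈ H → σ * y ∈ H ∨ t * (σ * y) ∈ H)
    (hA' : ∀ y, y ∈ H → σ⁻¹ * y ∈ H ∨ t * (σ⁻¹ * y) ∈ H)
    (hB' : ∀ y, t * y ∈ H → σ⁻¹ * y ∈ H ∨ t * (σ⁻¹ * y) ∈ H)
    {x : G} (hx : x ∈ Subgroup.closure {σ, t}) : x ∈ H ∨ t * x ∈ H := by
  have hti : t⁻¹ = t := inv_eq_of_mul_eq_one_right ht
  induction hx using Subgroup.closure_induction_left with
  | one => exact Or.inl H.one_mem
  | mul_left x hxs y hy ih =>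
    rcases hxs with rfl | rfl
    · exact ih.elim (hA y) (hB y)
    · rcases ih with h | h
      · exact Or.inr (by rwa [← mul_assoc, ht, one_mul])
      · exact Or.inl h
  | inv_mul_cancel x hxs y hy ih =>
    rcases hxs with rfl | rfl
    · exact ih.elim (hA' y) (hB' y)
    · rw [hti]
      rcases ih with h | h
      · exact Or.inr (by rwa [← mul_assoc, ht, one_mul])
      · exact Or.inl h

/-- `Aₙ` is generated by two elements. -/
lemma alt_two_generated (n : ℕ) (hn : 5 ≤ n) :
    ∃ u v : Perm (Fin n), u ∈ alternatingGroup (Fin n) ∧ v ∈ alternatingGroup (Fin n) ∧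
      Subgroup.closure {u, v} = alternatingGroup (Fin n) := by
  haveI : NeZero n := ⟨by omega⟩
  obtain ⟨m, rfl⟩ : ∃ m, n = m + 1 := ⟨n - 1, by omega⟩
  set σ : Perm (Fin (m + 1)) := finRotate (m + 1) with hσdef
  have hcyc : IsCycle σ := isCycle_finRotate_of_le (by omega)
  have hsup : σ.support = Finset.univ := support_finRotate_of_le (by omega)
  set t : Perm (Fin (m + 1)) := swap 0 (σ 0) with htdef
  have htop : Subgroup.closure ({σ, t} : Set (Perm (Fin (m + 1)))) = ⊤ :=
    closure_cycle_adjacent_swap hcyc hsup 0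
  have ht2 : t * t = 1 := swap_mul_self _ _
  have hσ0 : σ 0 ≠ 0 := by
    have : (0 : Fin (m + 1)) ∈ σ.support := hsup ▸ Finset.mem_univ _
    exact fun h => (mem_support.1 this) h
  have hsignt : Perm.sign t = -1 := sign_swap (Ne.symm hσ0)
  have hsignσ : Perm.sign σ = (-1) ^ m := by rw [hσdef, sign_finRotate, Nat.add_sub_cancel]
  rcases Nat.even_or_odd m with hm | hm
  · -- `m` even, so `σ` is even: generators `σ` and `t * σ * t`.
    have hsσ : Perm.sign σ = 1 := by rw [hsignσ, hm.neg_one_pow]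
    refine ⟨σ, t * σ * t, mem_alternatingGroup.2 hsσ, ?_, ?_⟩
    · rw [mem_alternatingGroup, map_mul, map_mul, hsσ, hsignt]; decide
    set H := Subgroup.closure ({σ, t * σ * t} : Set (Perm (Fin (m + 1)))) with hH
    have huH : σ ∈ H := subset_closure (Set.mem_insert _ _)
    have hvH : t * σ * t ∈ H := subset_closure (Set.mem_insert_of_mem _ rfl)
    have hHle : H ≤ alternatingGroup (Fin (m + 1)) := by
      rw [hH, Subgroup.closure_le]
      rintro x (rfl | rfl)
      · exact mem_alternatingGroup.2 hsσ
      · rw [SetLike.mem_coe, mem_alternatingGroup, map_mul, map_mul, hsσ, hsignt]; decide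
    refine le_antisymm hHle ?_
    intro π hπ
    have hπK : π ∈ H ∨ t * π ∈ H := by
      refine coset_step ht2 ?_ ?_ ?_ ?_ (htop ▸ Subgroup.mem_top π)
      · exact fun y hy => Or.inl (H.mul_mem huH hy)
      · intro y hy
        refine Or.inr ?_
        have : t * (σ * y) = (t * σ * t) * (t * y) := by
          rw [mul_assoc (t * σ) t, ← mul_assoc t t y, ht2, one_mul, mul_assoc]
        rw [this]; exact H.mul_mem hvH hy
      · exact fun y hy => Or.inl (H.mul_mem (H.inv_mem huH) hy)
      · intro y hy
        refine Or.inr ?_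
        have hti : t⁻¹ = t := inv_eq_of_mul_eq_one_right ht2
        have : t * (σ⁻¹ * y) = (t * σ * t)⁻¹ * (t * y) := by
          rw [mul_inv_rev, mul_inv_rev, hti, mul_assoc, mul_assoc, ← mul_assoc t t y,
            ht2, one_mul]
        rw [this]; exact H.mul_mem (H.inv_mem hvH) hy
    rcases hπK with h | h
    · exact h
    · exfalso
      have h1 : Perm.sign (t * π) = 1 := mem_alternatingGroup.1 (hHle h)
      rw [map_mul, hsignt, mem_alternatingGroup.1 hπ] at h1
      exact absurd h1 (by decide)
  · -- `m` odd, so `σ` is odd: generators `t * σ` and `σ * t`.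
    have hsσ : Perm.sign σ = -1 := by rw [hsignσ, hm.neg_one_pow]
    refine ⟨t * σ, σ * t, ?_, ?_, ?_⟩
    · rw [mem_alternatingGroup, map_mul, hsignt, hsσ]; decide
    · rw [mem_alternatingGroup, map_mul, hsignt, hsσ]; decide
    set H := Subgroup.closure ({t * σ, σ * t} : Set (Perm (Fin (m + 1)))) with hH
    have huH : t * σ ∈ H := subset_closure (Set.mem_insert _ _)
    have hvH : σ * t ∈ H := subset_closure (Set.mem_insert_of_mem _ rfl)
    have hHle : H ≤ alternatingGroup (Fin (m + 1)) := by
      rw [hH, Subgroup.closure_le]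
      rintro x (rfl | rfl) <;>
        · rw [SetLike.mem_coe, mem_alternatingGroup, map_mul, hsignt, hsσ]; decide
    refine le_antisymm hHle ?_
    intro π hπ
    have hti : t⁻¹ = t := inv_eq_of_mul_eq_one_right ht2
    have hπK : π ∈ H ∨ t * π ∈ H := by
      refine coset_step ht2 ?_ ?_ ?_ ?_ (htop ▸ Subgroup.mem_top π)
      · intro y hy
        refine Or.inr ?_
        rw [← mul_assoc]; exact H.mul_mem huH hy
      · intro y hy
        refine Or.inl ?_
        have : σ * y = (σ * t) * (t * y) := by
          rw [mul_assoc, ← mul_assoc t t y, ht2, one_mul]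
        rw [this]; exact H.mul_mem hvH hy
      · intro y hy
        refine Or.inr ?_
        have : t * (σ⁻¹ * y) = (σ * t)⁻¹ * y := by
          rw [mul_inv_rev, hti, mul_assoc]
        rw [this]; exact H.mul_mem (H.inv_mem hvH) hy
      · intro y hy
        refine Or.inl ?_
        have : σ⁻¹ * y = (t * σ)⁻¹ * (t * y) := by
          rw [mul_inv_rev, hti, mul_assoc, ← mul_assoc t t y, ht2, one_mul]
        rw [this]; exact H.mul_mem (H.inv_mem huH) hy
    rcases hπK with h | h
    · exact h
    · exfalso
      have h1 : Perm.sign (t * π) = 1 := mem_alternatingGroup.1 (hHle h)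
      rw [map_mul, hsignt, mem_alternatingGroup.1 hπ] at h1
      exact absurd h1 (by decide)

open scoped commutatorElement in
/-- `Aₙ` is perfect for `n ≥ 5`. -/
lemma alt_commutator_eq_top (n : ℕ) (hn : 5 ≤ n) :
    commutator (alternatingGroup (Fin n)) = ⊤ := by
  have hcard : 5 ≤ Fintype.card (Fin n) := by simpa using hn
  have hi : Function.Injective (alternatingGroup (Fin n)).subtype := Subtype.coe_injective
  apply Subgroup.map_injective hi
  refine le_antisymm (Subgroup.map_mono le_top) ?_
  rw [← MonoidHom.range_eq_map, Subgroup.range_subtype]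
  refine le_trans (le_of_eq Equiv.Perm.closure_three_cycles_eq_alternating.symm)
    ((Subgroup.closure_le _).2 ?_)
  intro c hc
  have hc3 : c ∈ alternatingGroup (Fin n) := hc.mem_alternatingGroup
  have hinv : IsThreeCycle c⁻¹ := hc.inv
  obtain ⟨g, hg⟩ := isConj_iff.1
    (alternatingGroup.isThreeCycle_isConj (by simpa using hn)
      (σ := ⟨c⁻¹, hinv.mem_alternatingGroup⟩) (τ := ⟨c, hc3⟩) hinv hc)
  -- `⁅g, ⟨c⟩⁻¹⁆ = c * c` lies in the commutator subgroup
  have hmem : ⁅g, (⟨c, hc3⟩ : alternatingGroup (Fin n))⁻¹⁆ ∈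
      commutator (alternatingGroup (Fin n)) := by
    rw [commutator_eq_closure]
    exact Subgroup.subset_closure ⟨g, _, rfl⟩
  have hval : ((⁅g, (⟨c, hc3⟩ : alternatingGroup (Fin n))⁻¹⁆ :
      alternatingGroup (Fin n)) : Perm (Fin n)) = c * c := by
    have : g * (⟨c, hc3⟩ : alternatingGroup (Fin n))⁻¹ * g⁻¹ = ⟨c, hc3⟩ := by
      have : (⟨c, hc3⟩ : alternatingGroup (Fin n))⁻¹ = ⟨c⁻¹, hinv.mem_alternatingGroup⟩ := rfl
      rw [this, hg]
    rw [commutatorElement_def, this]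
    rfl
  have hcc : c * c ∈ Subgroup.map (alternatingGroup (Fin n)).subtype
      (commutator (alternatingGroup (Fin n))) :=
    ⟨_, hmem, hval⟩
  have h3 : c ^ 3 = 1 := by
    rw [← hc.orderOf]; exact pow_orderOf_eq_one c
  have hkey : (c * c) * (c * c) = c := by
    rw [← mul_assoc, show c * c * c = c ^ 3 by rw [pow_succ, pow_two], h3, one_mul]
  rw [SetLike.mem_coe, ← hkey]
  exact Subgroup.mul_mem _ hcc hcc

/-- For `n ≥ 5` there is an endomorphism `f` of the free group `F₂` on two
generators whose image lies in the commutator subgroup of `F₂`, together with a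
surjection `ψ : F₂ → Aₙ` onto the alternating group satisfying `ψ ∘ f = ψ`. -/
theorem stmt17 (n : ℕ) (hn : 5 ≤ n) :
    ∃ f : FreeGroup Bool →* FreeGroup Bool,
      (∀ w : FreeGroup Bool, f w ∈ commutator (FreeGroup Bool)) ∧
      ∃ ψ : FreeGroup Bool →* alternatingGroup (Fin n),
        Function.Surjective ψ ∧ ψ.comp f = ψ := by
  classical
  obtain ⟨u, v, hu, hv, hcl⟩ := alt_two_generated n hn
  set A := alternatingGroup (Fin n) with hA
  let a : A := ⟨u, hu⟩
  let b : A := ⟨v, hv⟩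
  let ψ : FreeGroup Bool →* A := FreeGroup.lift (fun i => if i then a else b)
  have hψt : ψ (FreeGroup.of true) = a := by simp [ψ]
  have hψf : ψ (FreeGroup.of false) = b := by simp [ψ]
  -- surjectivity of ψ
  have hrange : ψ.range = ⊤ := by
    have hi : Function.Injective A.subtype := Subtype.coe_injective
    apply Subgroup.map_injective hi
    have h2 : Subgroup.map A.subtype (⊤ : Subgroup A) = A := by
      rw [← MonoidHom.range_eq_map, Subgroup.range_subtype]
    rw [h2]
    refine le_antisymm ?_ ?_
    · rintro x ⟨y, _, rfl⟩; exact y.2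
    · refine le_trans (le_of_eq hcl.symm) ((Subgroup.closure_le _).2 ?_)
      rintro x (rfl | rfl)
      · exact ⟨a, ⟨FreeGroup.of true, hψt⟩, rfl⟩
      · exact ⟨b, ⟨FreeGroup.of false, hψf⟩, rfl⟩
  have hψs : Function.Surjective ψ := MonoidHom.range_eq_top.1 hrange
  -- the image of the commutator subgroup is everything
  have hmapcomm : Subgroup.map ψ (commutator (FreeGroup Bool)) = ⊤ := by
    rw [_root_.commutator_def, Subgroup.map_commutator, ← MonoidHom.range_eq_map, hrange,
      ← _root_.commutator_def, alt_commutator_eq_top n hn]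
  have ha : a ∈ Subgroup.map ψ (commutator (FreeGroup Bool)) := hmapcomm ▸ Subgroup.mem_top a
  have hb : b ∈ Subgroup.map ψ (commutator (FreeGroup Bool)) := hmapcomm ▸ Subgroup.mem_top b
  obtain ⟨x', hx', hψx⟩ := ha
  obtain ⟨y', hy', hψy⟩ := hb
  let f : FreeGroup Bool →* FreeGroup Bool := FreeGroup.lift (fun i => if i then x' else y')
  have hft : f (FreeGroup.of true) = x' := by simp [f]
  have hff : f (FreeGroup.of false) = y' := by simp [f]
  refine ⟨f, ?_, ψ, hψs, ?_⟩
  · intro w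
    have hw : w ∈ ((commutator (FreeGroup Bool)).comap f : Subgroup (FreeGroup Bool)) := by
      have : ((commutator (FreeGroup Bool)).comap f : Subgroup (FreeGroup Bool)) = ⊤ := by
        rw [eq_top_iff, ← FreeGroup.closure_range_of Bool, Subgroup.closure_le]
        rintro x ⟨i, rfl⟩
        cases i
        · simpa [Subgroup.mem_comap, hff] using hy'
        · simpa [Subgroup.mem_comap, hft] using hx'
      rw [this]; exact Subgroup.mem_top w
    exact hw
  · apply FreeGroup.ext_hom
    intro i
    cases i
    · rw [MonoidHom.comp_apply, hff, hψy, hψf]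
    · rw [MonoidHom.comp_apply, hft, hψx, hψt]
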